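/- Let m ≥ 1 and let s = ±1. For any integers a₁,...,a_k ≥ 1 with A := Σaᵢ ≤ m + 1 and A ≡ m + 1 (mod 2), and any ε > 0, there exist real numbers x₁ < ... < x_k in (−ε, ε) and a polynomial Q(y) = s·(y−x₁)^{a₁}···(y−x_k)^{a_k}·R(y), where R is a monic (up to sign matching s) polynomial of degree m+1−A with no real roots, such that s·Q is within distance O(ε) of s·y^{m+1} in the coefficients of degree ≤ m, and the zero set of Q in ℝ is exactly {x₁,...,x_k} with multiplicities a₁,...,a_k. In particular the right-hand side y^{m+1} of the normal form ẏ = s·y^{m+1} admits a small perturbation with exactly k equilibria of prescribed multiplicities. -/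

import Mathlib

open Polynomial

namespace CodimAux

open Finset

/-- Bound invariant: `p` is monic with `|coeff j| ≤ C(deg p, j) δ^(deg p − j)`. -/
def Good (δ : ℝ) (p : Polynomial ℝ) : Prop :=
  p.Monic ∧ ∀ j, |p.coeff j| ≤ (p.natDegree.choose j : ℝ) * δ ^ (p.natDegree - j)

lemma good_one (δ : ℝ) : Good δ 1 := by
  refine ⟨monic_one, fun j => ?_⟩
  rcases Nat.eq_zero_or_pos j with h | h
  · subst h; simp
  · have hj : j ≠ 0 := h.ne'
    simp [coeff_one, hj, Nat.choose_eq_zero_of_lt h]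

lemma good_mul {δ : ℝ} (hδ : 0 ≤ δ) {p q : Polynomial ℝ}
    (hp : Good δ p) (hq : Good δ q) : Good δ (p * q) := by
  obtain ⟨hpm, hpc⟩ := hp
  obtain ⟨hqm, hqc⟩ := hq
  refine ⟨hpm.mul hqm, fun j => ?_⟩
  rw [natDegree_mul hpm.ne_zero hqm.ne_zero, coeff_mul]
  calc |∑ ij ∈ antidiagonal j, p.coeff ij.1 * q.coeff ij.2|
      ≤ ∑ ij ∈ antidiagonal j, |p.coeff ij.1 * q.coeff ij.2| :=
        Finset.abs_sum_le_sum_abs _ _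
    _ ≤ ∑ ij ∈ antidiagonal j,
          ((p.natDegree.choose ij.1 : ℝ) * δ ^ (p.natDegree - ij.1)) *
            ((q.natDegree.choose ij.2 : ℝ) * δ ^ (q.natDegree - ij.2)) := by
        refine Finset.sum_le_sum fun ij _ => ?_
        rw [abs_mul]
        exact mul_le_mul (hpc ij.1) (hqc ij.2) (abs_nonneg _) (by positivity)
    _ = ∑ ij ∈ antidiagonal j,
          ((p.natDegree.choose ij.1 : ℝ) * (q.natDegree.choose ij.2 : ℝ)) *
            δ ^ (p.natDegree + q.natDegree - j) := by
        refine Finset.sum_congr rfl fun ij hij => ?_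
        rw [Finset.HasAntidiagonal.mem_antidiagonal] at hij
        rcases le_or_gt ij.1 p.natDegree with h1 | h1
        · rcases le_or_gt ij.2 q.natDegree with h2 | h2
          · have he : p.natDegree - ij.1 + (q.natDegree - ij.2)
                = p.natDegree + q.natDegree - j := by omega
            rw [← he, pow_add]; ring
          · simp [Nat.choose_eq_zero_of_lt h2]
        · simp [Nat.choose_eq_zero_of_lt h1]
    _ = ((p.natDegree + q.natDegree).choose j : ℝ) *
          δ ^ (p.natDegree + q.natDegree - j) := by
        rw [← Finset.sum_mul]
        congr 1
        rw [Nat.add_choose_eq]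
        push_cast
        rfl

lemma good_pow {δ : ℝ} (hδ : 0 ≤ δ) {p : Polynomial ℝ} (hp : Good δ p) :
    ∀ n : ℕ, Good δ (p ^ n) := by
  intro n
  induction n with
  | zero => simpa using good_one δ
  | succ n ih => rw [pow_succ]; exact good_mul hδ ih hp

lemma good_linear {δ c : ℝ} (hδ : 0 ≤ δ) (hc : |c| ≤ δ) :
    Good δ (X - C c) := by
  refine ⟨monic_X_sub_C c, fun j => ?_⟩
  rw [natDegree_X_sub_C]
  match j with
  | 0 => simpa using hc
  | 1 => simp
  | (j + 2) =>
      rw [Nat.choose_eq_zero_of_lt (by omega)]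
      simp [coeff_X, coeff_C]

lemma good_quad {δ : ℝ} (hδ : 0 ≤ δ) : Good δ (X ^ 2 + C (δ ^ 2)) := by
  refine ⟨monic_X_pow_add_C _ (by norm_num : (2:ℕ) ≠ 0), fun j => ?_⟩
  rw [natDegree_X_pow_add_C]
  match j with
  | 0 =>
      rw [coeff_add, coeff_X_pow, coeff_C, if_neg (by norm_num), if_pos rfl,
        zero_add, abs_of_nonneg (by positivity : (0:ℝ) ≤ δ ^ 2)]
      simp
  | 1 =>
      rw [coeff_add, coeff_X_pow, coeff_C, if_neg (by norm_num),
        if_neg (by norm_num), add_zero, abs_zero]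
      positivity
  | 2 =>
      rw [coeff_add, coeff_X_pow, coeff_C, if_pos rfl, if_neg (by norm_num),
        add_zero]
      simp
  | (j + 3) =>
      rw [Nat.choose_eq_zero_of_lt (by omega), coeff_add, coeff_X_pow, coeff_C,
        if_neg (by omega), if_neg (by omega), add_zero, abs_zero]
      simp

lemma choose_le_two_pow (n j : ℕ) : n.choose j ≤ 2 ^ n := by
  rcases le_or_gt j n with h | h
  · calc n.choose j ≤ ∑ i ∈ Finset.range (n + 1), n.choose i :=
        Finset.single_le_sum (fun i _ => Nat.zero_le _)
          (Finset.mem_range.mpr (by omega))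
      _ = 2 ^ n := Nat.sum_range_choose n
  · rw [Nat.choose_eq_zero_of_lt h]; exact Nat.zero_le _

end CodimAux

/-- Case A1.m: any admissible configuration of equilibria (multiplicities `aᵢ`
summing to `A ≤ m+1` with `A ≡ m+1 (mod 2)`) is realized by a small perturbation
`Q = s·∏(y−xᵢ)^{aᵢ}·R` of `s·y^{m+1}`, with `R` monic without real roots and the
low-order coefficients within `O(ε)` of those of `s·y^{m+1}`. -/
theorem codim_m_equilibrium_realization
    (m : ℕ) (hm : 1 ≤ m) (s : ℝ) (hs : s = 1 ∨ s = -1)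
    {k : ℕ} (a : Fin k → ℕ) (ha : ∀ i, 1 ≤ a i)
    (A : ℕ) (hA : A = ∑ i, a i) (hAle : A ≤ m + 1)
    (hpar : A % 2 = (m + 1) % 2) :
    ∃ K > (0:ℝ), ∀ ε > (0:ℝ), ∃ x : Fin k → ℝ,
      StrictMono x ∧ (∀ i, x i ∈ Set.Ioo (-ε) ε) ∧
      ∃ R : Polynomial ℝ, R.Monic ∧ R.natDegree = m + 1 - A ∧
        (∀ r : ℝ, R.eval r ≠ 0) ∧
        (∀ j ≤ m,
          |(C s * (∏ i, (X - C (x i)) ^ a i) * R).coeff j -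
            (C s * X ^ (m + 1) : Polynomial ℝ).coeff j| ≤ K * ε) ∧
        (∀ r : ℝ, (C s * (∏ i, (X - C (x i)) ^ a i) * R).eval r = 0 ↔
          ∃ i, r = x i) ∧
        (∀ i, (C s * (∏ i, (X - C (x i)) ^ a i) * R).rootMultiplicity (x i)
          = a i) := by
  have hs0 : s ≠ 0 := by rcases hs with h | h <;> rw [h] <;> norm_num
  have habs : |s| = 1 := by rcases hs with h | h <;> rw [h] <;> norm_num
  refine ⟨2 ^ (m + 1), by positivity, fun ε hε => ?_⟩
  set δ : ℝ := min ε 1 with hδdef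
  have hδ0 : 0 < δ := lt_min hε one_pos
  have hδ1 : δ ≤ 1 := min_le_right _ _
  have hδε : δ ≤ ε := min_le_left _ _
  -- the equilibria
  set x : Fin k → ℝ := fun i => δ * (i + 1) / (2 * (k + 1)) with hxdef
  have hxpos : ∀ i, 0 < x i := by
    intro i
    apply div_pos (by positivity) (by positivity)
  have hxlt : ∀ i, x i < δ := by
    intro i
    rw [hxdef, div_lt_iff₀ (by positivity)]
    have h1 : (i : ℝ) + 1 < 2 * (k + 1) := by
      have := i.2
      push_cast
      have : (i : ℝ) < k := by exact_mod_cast i.2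
      nlinarith
    nlinarith
  have hxmono : StrictMono x := by
    intro i j hij
    rw [hxdef]
    have hij' : (i : ℝ) < j := by exact_mod_cast hij
    rw [div_lt_div_iff₀ (by positivity) (by positivity)]
    have key := mul_lt_mul_of_pos_left (show (i:ℝ) + 1 < (j:ℝ) + 1 by linarith) hδ0
    have key2 := mul_lt_mul_of_pos_right key
      (show (0:ℝ) < 2 * ((k:ℝ) + 1) by positivity)
    linarith
  have hxabs : ∀ i, |x i| ≤ δ := fun i => by
    rw [abs_of_pos (hxpos i)]; exact (hxlt i).le
  -- the factor without real roots
  have heven : (m + 1 - A) % 2 = 0 := by omega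
  set n : ℕ := (m + 1 - A) / 2 with hndef
  set R : Polynomial ℝ := (X ^ 2 + C (δ ^ 2)) ^ n with hRdef
  have hRmonic : R.Monic := by
    rw [hRdef]; exact (monic_X_pow_add_C _ (by norm_num : (2:ℕ) ≠ 0)).pow n
  have hRdeg : R.natDegree = m + 1 - A := by
    rw [hRdef, natDegree_pow, natDegree_X_pow_add_C]; omega
  have hReval : ∀ r : ℝ, R.eval r ≠ 0 := by
    intro r
    have h1 : (0:ℝ) < r ^ 2 + δ ^ 2 := by positivity
    rw [hRdef]
    simp only [eval_pow, eval_add, eval_X, eval_C]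
    exact ne_of_gt (pow_pos h1 n)
  -- Good invariants
  set P : Polynomial ℝ := ∏ i, (X - C (x i)) ^ a i with hPdef
  have hGoodP : CodimAux.Good δ P := by
    rw [hPdef]
    refine Finset.prod_induction _ _ (fun p q hp hq => CodimAux.good_mul hδ0.le hp hq)
      (CodimAux.good_one δ) (fun i _ => ?_)
    exact CodimAux.good_pow hδ0.le (CodimAux.good_linear hδ0.le (hxabs i)) (a i)
  have hGoodR : CodimAux.Good δ R :=
    CodimAux.good_pow hδ0.le (CodimAux.good_quad hδ0.le) n
  have hGoodQ : CodimAux.Good δ (P * R) := CodimAux.good_mul hδ0.le hGoodP hGoodR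
  have hPmonic : P.Monic := hGoodP.1
  have hPdeg : P.natDegree = A := by
    rw [hPdef, natDegree_prod _ _ (fun i _ => pow_ne_zero _ (X_sub_C_ne_zero _))]
    simp [natDegree_pow, natDegree_X_sub_C, hA]
  have hQdeg : (P * R).natDegree = m + 1 := by
    rw [natDegree_mul hPmonic.ne_zero hRmonic.ne_zero, hPdeg, hRdeg]; omega
  refine ⟨x, hxmono, ?_, R, hRmonic, hRdeg, hReval, ?_, ?_, ?_⟩
  · -- membership in (-ε, ε)
    intro i
    exact ⟨by linarith [hxpos i], lt_of_lt_of_le (hxlt i) hδε⟩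
  · -- coefficient bound
    intro j hj
    rw [← hPdef, mul_assoc, coeff_C_mul, coeff_C_mul, coeff_X_pow,
      if_neg (by omega), mul_zero, sub_zero, abs_mul, habs, one_mul]
    calc |(P * R).coeff j| ≤ ((m + 1).choose j : ℝ) * δ ^ (m + 1 - j) := by
          have h := hGoodQ.2 j; rwa [hQdeg] at h
      _ ≤ 2 ^ (m + 1) * δ := by
          apply mul_le_mul ?_ ?_ (by positivity) (by positivity)
          · exact_mod_cast CodimAux.choose_le_two_pow (m + 1) j
          · calc δ ^ (m + 1 - j) ≤ δ ^ 1 :=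
                pow_le_pow_of_le_one hδ0.le hδ1 (by omega)
              _ = δ := pow_one δ
      _ ≤ 2 ^ (m + 1) * ε := by
          have h2 : (0:ℝ) < 2 ^ (m + 1) := by positivity
          nlinarith
  · -- zero set
    intro r
    rw [← hPdef, mul_assoc, eval_mul, eval_C, eval_mul]
    have hPeval : P.eval r = ∏ i, (r - x i) ^ a i := by
      rw [hPdef]; simp [eval_prod]
    rw [hPeval]
    constructor
    · intro h
      rcases mul_eq_zero.mp h with h | h
      · exact absurd h hs0
      rcases mul_eq_zero.mp h with h | h
      · obtain ⟨i, _, hi⟩ := Finset.prod_eq_zero_iff.mp h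
        refine ⟨i, ?_⟩
        have := pow_eq_zero_iff (Nat.one_le_iff_ne_zero.mp (ha i)) |>.mp hi
        linarith [sub_eq_zero.mp this]
      · exact absurd h (hReval r)
    · rintro ⟨i, rfl⟩
      rw [Finset.prod_eq_zero (Finset.mem_univ i)
        (by rw [sub_self]; exact zero_pow (Nat.one_le_iff_ne_zero.mp (ha i)))]
      ring
  · -- root multiplicities
    intro i
    have hPR0 : P * R ≠ 0 := (hGoodQ.1).ne_zero
    have hQ0 : C s * (P * R) ≠ 0 := mul_ne_zero (by simpa using hs0) hPR0
    rw [← hPdef, mul_assoc, rootMultiplicity_mul hQ0, rootMultiplicity_mul hPR0,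
      rootMultiplicity_eq_zero (p := C s) (by simp [IsRoot, hs0]),
      rootMultiplicity_eq_zero (p := R) (hReval (x i)), zero_add, add_zero]
    have hsplit : P = (X - C (x i)) ^ a i *
        ∏ j ∈ Finset.univ.erase i, (X - C (x j)) ^ a j := by
      rw [hPdef]
      exact (Finset.mul_prod_erase Finset.univ
        (fun j => (X - C (x j)) ^ a j) (Finset.mem_univ i)).symm
    have herase0 : (∏ j ∈ Finset.univ.erase i, (X - C (x j)) ^ a j) ≠ 0 :=
      Finset.prod_ne_zero_iff.mpr fun j _ => pow_ne_zero _ (X_sub_C_ne_zero _)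
    have hmul0 : (X - C (x i)) ^ a i *
        (∏ j ∈ Finset.univ.erase i, (X - C (x j)) ^ a j) ≠ 0 :=
      mul_ne_zero (pow_ne_zero _ (X_sub_C_ne_zero _)) herase0
    rw [hsplit, rootMultiplicity_mul hmul0, rootMultiplicity_X_sub_C_pow,
      rootMultiplicity_eq_zero, add_zero]
    intro hroot
    rw [IsRoot, eval_prod] at hroot
    obtain ⟨j, hj, hj0⟩ := Finset.prod_eq_zero_iff.mp hroot
    simp only [eval_pow, eval_sub, eval_X, eval_C] at hj0
    have hj1 := pow_eq_zero_iff (Nat.one_le_iff_ne_zero.mp (ha j)) |>.mp hj0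
    have hxij : x i = x j := by linarith [sub_eq_zero.mp hj1]
    exact (Finset.ne_of_mem_erase hj) (hxmono.injective hxij.symm)
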